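/- Let G be a 2-edge-connected undirected graph, and let H be a strongly connected orientation-subgraph (i.e., a strongly connected subdigraph of the bidirected version of G that spans V(G)) whose underlying undirected multigraph has a bridge e = {u,v}. Then H must contain both arcs (u,v) and (v,u), and since G is 2-edge-connected there exists another edge of G crossing the cut determined by e; replacing one of the two orientations of e by a suitable orientation of that edge preserves strong connectivity, keeps the number of arcs unchanged, and strictly decreases the number of bridges of the underlying graph. -/

import Mathlib

attribute [local instance] Classical.propDecidable

variable {V : Type*} [Fintype V] [DecidableEq V]

/-- Reachability in the underlying undirected graph of the arc set `H`. -/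
def uReach (H : Finset (V × V)) (a b : V) : Prop :=
  Relation.ReflTransGen (fun x y => (x, y) ∈ H ∨ (y, x) ∈ H) a b

/-- `{u,v}` is a bridge of the underlying undirected graph of the arc set `H`. -/
def IsBridge (H : Finset (V × V)) (u v : V) : Prop :=
  ((u, v) ∈ H ∨ (v, u) ∈ H) ∧ ¬ uReach ((H.erase (u, v)).erase (v, u)) u v

/-- The number of bridges of the underlying undirected graph of `H`. -/
noncomputable def numBridges (H : Finset (V × V)) : ℕ :=
  (((Finset.univ : Finset (V × V)).filter fun p => IsBridge H p.1 p.2).image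
    fun p => Sym2.mk p).card

/-- Along any `ReflTransGen` path from a `P`-vertex to a non-`P`-vertex there is a
crossing step, with prefix and suffix paths. -/
private lemma crossing {α : Type*} {r : α → α → Prop} {P : α → Prop} {x y : α}
    (h : Relation.ReflTransGen r x y) (hx : P x) (hy : ¬ P y) :
    ∃ c d, Relation.ReflTransGen r x c ∧ r c d ∧ P c ∧ ¬ P d ∧
      Relation.ReflTransGen r d y := by
  revert hx
  induction h using Relation.ReflTransGen.head_induction_on with
  | refl => exact fun hx => absurd hx hy
  | @head p c h' hrest ih =>
    intro hx
    by_cases hc : P c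
    · obtain ⟨c', d', p1, st, pc, pd, p2⟩ := ih hc
      exact ⟨c', d', Relation.ReflTransGen.head h' p1, st, pc, pd, p2⟩
    · exact ⟨p, c, Relation.ReflTransGen.refl, h', hx, hc, hrest⟩

/-- A directed walk either avoids the arc `(u,v)` entirely, or it can be split into an
avoiding walk to `u` and an avoiding walk from `v`. -/
private lemma avoidSplit {V : Type*} [DecidableEq V] (H : Finset (V × V)) (u v : V) {x y : V}
    (h : Relation.ReflTransGen (fun p q => (p, q) ∈ H) x y) :
    Relation.ReflTransGen (fun p q => (p, q) ∈ H.erase (u, v)) x y ∨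
      (Relation.ReflTransGen (fun p q => (p, q) ∈ H.erase (u, v)) x u ∧
       Relation.ReflTransGen (fun p q => (p, q) ∈ H.erase (u, v)) v y) := by
  induction h with
  | refl => exact Or.inl Relation.ReflTransGen.refl
  | @tail c d hxc hcd ih =>
    by_cases hne : (c, d) = (u, v)
    · have hc : c = u := (Prod.ext_iff.mp hne).1
      have hd : d = v := (Prod.ext_iff.mp hne).2
      rcases ih with h1 | ⟨h1, h2⟩
      · exact Or.inr ⟨hc ▸ h1, hd ▸ Relation.ReflTransGen.refl⟩
      · exact Or.inr ⟨h1, hd ▸ Relation.ReflTransGen.refl⟩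
    · have hcd' : (c, d) ∈ H.erase (u, v) := Finset.mem_erase.mpr ⟨hne, hcd⟩
      rcases ih with h1 | ⟨h1, h2⟩
      · exact Or.inl (h1.tail hcd')
      · exact Or.inr ⟨h1, h2.tail hcd'⟩

private lemma uReach_symm {V : Type*} [DecidableEq V] {K : Finset (V × V)} {x y : V}
    (h : uReach K x y) : uReach K y x := by
  induction h with
  | refl => exact Relation.ReflTransGen.refl
  | tail hp hs ih => exact Relation.ReflTransGen.head hs.symm ih

private lemma uReach_mono {V : Type*} [DecidableEq V] {K K' : Finset (V × V)} (hsub : K ⊆ K')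
    {x y : V} (h : uReach K x y) : uReach K' x y :=
  Relation.ReflTransGen.mono (fun a b (hpq : (a, b) ∈ K ∨ (b, a) ∈ K) =>
    (hpq.imp (fun h => hsub h) (fun h => hsub h) : (a, b) ∈ K' ∨ (b, a) ∈ K')) _ _ h

/-- Erasing the arc `(u,v)` does not change the underlying undirected reachability,
provided the opposite arc `(v,u)` is present. -/
private lemma uReach_erase {V : Type*} [DecidableEq V] {K : Finset (V × V)} {u v : V}
    (hvu : (v, u) ∈ K) (hne : u ≠ v) {x y : V} (h : uReach K x y) :
    uReach (K.erase (u, v)) x y := by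
  refine Relation.ReflTransGen.mono (fun p q (hpq : (p, q) ∈ K ∨ (q, p) ∈ K) =>
    (?_ : (p, q) ∈ K.erase (u, v) ∨ (q, p) ∈ K.erase (u, v))) _ _ h
  have hvune : (v, u) ≠ (u, v) := fun he => hne ((Prod.ext_iff.mp he).2)
  rcases hpq with h1 | h1
  · by_cases hpq' : (p, q) = (u, v)
    · right
      have : (q, p) = (v, u) := by
        rw [Prod.ext_iff] at hpq' ⊢; exact ⟨hpq'.2, hpq'.1⟩
      rw [this]; exact Finset.mem_erase.mpr ⟨hvune, hvu⟩
    · exact Or.inl (Finset.mem_erase.mpr ⟨hpq', h1⟩)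
  · by_cases hqp' : (q, p) = (u, v)
    · left
      have : (p, q) = (v, u) := by
        rw [Prod.ext_iff] at hqp' ⊢; exact ⟨hqp'.2, hqp'.1⟩
      rw [this]; exact Finset.mem_erase.mpr ⟨hvune, hvu⟩
    · exact Or.inr (Finset.mem_erase.mpr ⟨hqp', h1⟩)

/-- If `G` is 2-edge-connected, `H` is a strongly connected spanning subdigraph of the
bidirected version of `G`, and `{u,v}` is a bridge of the underlying graph of `H`, then
`H` contains both arcs `(u,v)` and `(v,u)`, there is another edge of `G` crossing the cut
determined by the bridge, and replacing one orientation of the bridge by a suitable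
orientation of that edge preserves strong connectivity, keeps the number of arcs unchanged
and strictly decreases the number of bridges. -/
theorem stmt_9 (E : Finset (Sym2 V)) (h2 : 2 ≤ Fintype.card V)
    (h2ecConn : ∀ a b : V, Relation.ReflTransGen (fun x y => s(x, y) ∈ E) a b)
    (h2ec : ∀ e ∈ E, ∀ a b : V, Relation.ReflTransGen (fun x y => s(x, y) ∈ E.erase e) a b)
    (H : Finset (V × V)) (hHsub : ∀ p ∈ H, s(p.1, p.2) ∈ E)
    (hHsc : ∀ a b : V, Relation.ReflTransGen (fun x y => (x, y) ∈ H) a b)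
    (u v : V) (hbridge : IsBridge H u v) :
    (u, v) ∈ H ∧ (v, u) ∈ H ∧
    ∃ a b : V, s(a, b) ∈ E ∧ s(a, b) ≠ s(u, v) ∧
      uReach ((H.erase (u, v)).erase (v, u)) a u ∧
      uReach ((H.erase (u, v)).erase (v, u)) b v ∧
      ∃ rem add : V × V, (rem = (u, v) ∨ rem = (v, u)) ∧ (add = (a, b) ∨ add = (b, a)) ∧
        (∀ x y : V, Relation.ReflTransGen (fun p q => (p, q) ∈ insert add (H.erase rem)) x y) ∧
        (insert add (H.erase rem)).card = H.card ∧
        numBridges (insert add (H.erase rem)) < numBridges H := by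
  obtain ⟨hedge, hnotr⟩ := hbridge
  set H' : Finset (V × V) := (H.erase (u, v)).erase (v, u) with hH'def
  set S : V → Prop := fun x => uReach H' u x with hSdef
  have hSu : S u := Relation.ReflTransGen.refl
  have hSv : ¬ S v := hnotr
  have huvne : u ≠ v := fun h => hnotr (h ▸ Relation.ReflTransGen.refl)
  have hmemH' : ∀ p : V × V, p ∈ H' ↔ p ∈ H ∧ p ≠ (u, v) ∧ p ≠ (v, u) := by
    intro p; rw [hH'def]; simp only [Finset.mem_erase]; tauto
  have hcross1 : ∀ c d : V, (c, d) ∈ H → S c → ¬ S d → (c, d) = (u, v) := by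
    intro c d hcd hc hd
    by_contra hne
    by_cases hvu' : (c, d) = (v, u)
    · simp only [Prod.mk.injEq] at hvu'
      exact hSv (hvu'.1 ▸ hc)
    · have hm : (c, d) ∈ H' := (hmemH' _).mpr ⟨hcd, hne, hvu'⟩
      exact hd (hc.tail (Or.inl hm))
  have hcross2 : ∀ c d : V, (c, d) ∈ H → ¬ S c → S d → (c, d) = (v, u) := by
    intro c d hcd hc hd
    by_contra hne
    by_cases huv' : (c, d) = (u, v)
    · simp only [Prod.mk.injEq] at huv'
      exact hc (huv'.1 ▸ hSu)
    · have hm : (c, d) ∈ H' := (hmemH' _).mpr ⟨hcd, huv', hne⟩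
      exact hc (hd.tail (Or.inr hm))
  have huvH : (u, v) ∈ H := by
    obtain ⟨c, d, _, hcd, hc, hd, _⟩ := crossing (P := S) (hHsc u v) hSu hSv
    have := hcross1 c d hcd hc hd
    rw [this] at hcd; exact hcd
  have hvuH : (v, u) ∈ H := by
    obtain ⟨c, d, _, hcd, hc, hd, _⟩ :=
      crossing (P := fun x => ¬ S x) (hHsc v u) hSv (not_not_intro hSu)
    have := hcross2 c d hcd hc (not_not.mp hd)
    rw [this] at hcd; exact hcd
  have hcover : ∀ x : V, S x ∨ uReach H' v x := by
    intro x
    have h := hHsc u x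
    induction h with
    | refl => exact Or.inl hSu
    | @tail c d hc hcd ih =>
      by_cases h1 : (c, d) = (u, v)
      · have hd : d = v := (Prod.ext_iff.mp h1).2
        rw [hd]; exact Or.inr Relation.ReflTransGen.refl
      · by_cases h2 : (c, d) = (v, u)
        · have hd : d = u := (Prod.ext_iff.mp h2).2
          rw [hd]; exact Or.inl hSu
        · have hm : (c, d) ∈ H' := (hmemH' _).mpr ⟨hcd, h1, h2⟩
          rcases ih with h | h
          · exact Or.inl (h.tail (Or.inl hm))
          · exact Or.inr (h.tail (Or.inl hm))
  -- find the crossing edge of `E`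
  have hEuv : s(u, v) ∈ E := hHsub (u, v) huvH
  obtain ⟨a, b, _, hab, hSa, hSb, _⟩ := crossing (P := S) (h2ec s(u, v) hEuv u v) hSu hSv
  have habE : s(a, b) ∈ E := (Finset.mem_erase.mp hab).2
  have habne : s(a, b) ≠ s(u, v) := (Finset.mem_erase.mp hab).1
  have hTb : uReach H' v b := (hcover b).resolve_left hSb
  have habuv : (a, b) ≠ (u, v) := by
    intro h; simp only [Prod.mk.injEq] at h; exact habne (by rw [h.1, h.2])
  have habvu : (a, b) ≠ (v, u) := by
    intro h; simp only [Prod.mk.injEq] at h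
    exact habne (by rw [h.1, h.2, Sym2.eq_swap])
  have habH : (a, b) ∉ H := fun h => habuv (hcross1 a b h hSa hSb)
  have hbaH : (b, a) ∉ H := by
    intro h
    have h2' := hcross2 b a h hSb hSa
    simp only [Prod.mk.injEq] at h2'
    exact habne (by rw [h2'.2, h2'.1, Sym2.eq_swap])
  -- the new digraph
  refine ⟨huvH, hvuH, a, b, habE, habne, uReach_symm hSa, uReach_symm hTb,
    (u, v), (a, b), Or.inl rfl, Or.inl rfl, ?_, ?_, ?_⟩
  -- strong connectivity
  · have hE1D : ∀ {p q : V}, Relation.ReflTransGen (fun p q => (p, q) ∈ H.erase (u, v)) p q →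
        Relation.ReflTransGen (fun p q => (p, q) ∈ insert (a, b) (H.erase (u, v))) p q :=
      fun h => Relation.ReflTransGen.mono (fun p q (hpq : (p, q) ∈ H.erase (u, v)) =>
        (Finset.mem_insert_of_mem hpq : (p, q) ∈ insert (a, b) (H.erase (u, v)))) _ _ h
    have key1 : Relation.ReflTransGen (fun p q => (p, q) ∈ H.erase (u, v)) u a := by
      rcases avoidSplit H u v (hHsc u a) with h | ⟨h1, h2⟩
      · exact h
      · obtain ⟨c, d, _, hcd, hc, hd, hsuf⟩ :=
          crossing (P := fun z => ¬ S z) h2 hSv (not_not_intro hSa)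
        have hcdH : (c, d) ∈ H := (Finset.mem_erase.mp hcd).2
        have h3 := hcross2 c d hcdH hc (not_not.mp hd)
        simp only [Prod.mk.injEq] at h3
        rw [h3.2] at hsuf
        exact hsuf
    have key2 : Relation.ReflTransGen (fun p q => (p, q) ∈ H.erase (u, v)) b v := by
      rcases avoidSplit H u v (hHsc b v) with h | ⟨h1, h2⟩
      · exact h
      · obtain ⟨c, d, hpre, hcd, hc, hd, _⟩ :=
          crossing (P := fun z => ¬ S z) h1 hSb (not_not_intro hSu)
        have hcdH : (c, d) ∈ H := (Finset.mem_erase.mp hcd).2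
        have h3 := hcross2 c d hcdH hc (not_not.mp hd)
        simp only [Prod.mk.injEq] at h3
        rw [h3.1] at hpre
        exact hpre
    have hstep : Relation.ReflTransGen
        (fun p q => (p, q) ∈ insert (a, b) (H.erase (u, v))) a b :=
      Relation.ReflTransGen.single (Finset.mem_insert_self _ _)
    have huvD : Relation.ReflTransGen
        (fun p q => (p, q) ∈ insert (a, b) (H.erase (u, v))) u v :=
      ((hE1D key1).trans hstep).trans (hE1D key2)
    intro x y
    rcases avoidSplit H u v (hHsc x y) with h | ⟨h1, h2⟩
    · exact hE1D h
    · exact ((hE1D h1).trans huvD).trans (hE1D h2)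
  -- cardinality
  · rw [Finset.card_insert_of_notMem (fun h => habH (Finset.mem_erase.mp h).2),
      Finset.card_erase_of_mem huvH]
    have : 0 < H.card := Finset.card_pos.mpr ⟨_, huvH⟩
    omega
  -- number of bridges decreases
  · set D : Finset (V × V) := insert (a, b) (H.erase (u, v)) with hDdef
    have hF0 : ∀ x y : V, uReach H x y :=
      fun x y => Relation.ReflTransGen.mono (fun p q (h : (p, q) ∈ H) =>
        (Or.inl h : (p, q) ∈ H ∨ (q, p) ∈ H)) _ _ (hHsc x y)
    have hDuv : (D.erase (u, v)).erase (v, u) = insert (a, b) H' := by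
      rw [hDdef, hH'def, Finset.erase_insert_of_ne habuv, Finset.erase_insert_of_ne habvu,
        Finset.erase_idem]
    have hF1 : uReach (insert (a, b) H') u v := by
      have hmono_ins : ∀ {x y : V}, uReach H' x y → uReach (insert (a, b) H') x y :=
        fun h => uReach_mono (Finset.subset_insert _ _) h
      exact ((hmono_ins hSa).tail (Or.inl (Finset.mem_insert_self _ _))).trans
        (hmono_ins (uReach_symm hTb))
    have hnotBruv : ¬ IsBridge D u v := by
      intro hB
      exact hB.2 (hDuv ▸ hF1)
    have hnotBrvu : ¬ IsBridge D v u := by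
      intro hB
      apply hB.2
      rw [Finset.erase_right_comm, hDuv]
      exact uReach_symm hF1
    have hDab : (D.erase (a, b)).erase (b, a) = H.erase (u, v) := by
      rw [hDdef, Finset.erase_insert (fun h => habH (Finset.mem_erase.mp h).2)]
      exact Finset.erase_eq_of_notMem (fun h => hbaH (Finset.mem_erase.mp h).2)
    have hFab : uReach (H.erase (u, v)) a b := uReach_erase hvuH huvne (hF0 a b)
    have hnotBrab : ¬ IsBridge D a b := by
      intro hB
      exact hB.2 (hDab ▸ hFab)
    have hnotBrba : ¬ IsBridge D b a := by
      intro hB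
      apply hB.2
      rw [Finset.erase_right_comm, hDab]
      exact uReach_symm hFab
    have hbridgeD : ∀ x y : V, IsBridge D x y → IsBridge H x y := by
      intro x y hB
      obtain ⟨he, hnr⟩ := hB
      have hxyab : s(x, y) ≠ s(a, b) := by
        intro hs
        rcases Sym2.eq_iff.mp hs with ⟨hx, hy⟩ | ⟨hx, hy⟩
        · exact hnotBrab (hx ▸ hy ▸ ⟨he, hnr⟩)
        · exact hnotBrba (hx ▸ hy ▸ ⟨he, hnr⟩)
      have hxyuv : s(x, y) ≠ s(u, v) := by
        intro hs
        rcases Sym2.eq_iff.mp hs with ⟨hx, hy⟩ | ⟨hx, hy⟩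
        · exact hnotBruv (hx ▸ hy ▸ ⟨he, hnr⟩)
        · exact hnotBrvu (hx ▸ hy ▸ ⟨he, hnr⟩)
      have hxyne : (x, y) ≠ (a, b) := fun h => hxyab (by
        simp only [Prod.mk.injEq] at h; rw [h.1, h.2])
      have hyxne : (y, x) ≠ (a, b) := fun h => hxyab (by
        simp only [Prod.mk.injEq] at h; rw [h.1, h.2, Sym2.eq_swap])
      have hvuxy : (v, u) ≠ (x, y) := fun h => hxyuv (by
        simp only [Prod.mk.injEq] at h; rw [← h.1, ← h.2, Sym2.eq_swap])
      have hvuyx : (v, u) ≠ (y, x) := fun h => hxyuv (by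
        simp only [Prod.mk.injEq] at h; rw [← h.1, ← h.2])
      constructor
      · rcases he with h | h
        · rcases Finset.mem_insert.mp h with h' | h'
          · exact absurd h' hxyne
          · exact Or.inl (Finset.mem_erase.mp h').2
        · rcases Finset.mem_insert.mp h with h' | h'
          · exact absurd h' hyxne
          · exact Or.inr (Finset.mem_erase.mp h').2
      · intro hre
        apply hnr
        have hvuK : (v, u) ∈ (H.erase (x, y)).erase (y, x) :=
          Finset.mem_erase.mpr ⟨hvuyx, Finset.mem_erase.mpr ⟨hvuxy, hvuH⟩⟩
        have step1 : uReach (((H.erase (x, y)).erase (y, x)).erase (u, v)) x y :=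
          uReach_erase hvuK huvne hre
        refine uReach_mono ?_ step1
        intro p hp
        simp only [Finset.mem_erase] at hp
        obtain ⟨hp1, hp2, hp3, hp4⟩ := hp
        refine Finset.mem_erase.mpr ⟨hp2, Finset.mem_erase.mpr ⟨hp3, ?_⟩⟩
        exact Finset.mem_insert_of_mem (Finset.mem_erase.mpr ⟨hp1, hp4⟩)
    -- the image for D is a strict subset of the image for H
    have hss : (((Finset.univ : Finset (V × V)).filter fun p => IsBridge D p.1 p.2).image
          fun p => Sym2.mk p) ⊂
        (((Finset.univ : Finset (V × V)).filter fun p => IsBridge H p.1 p.2).image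
          fun p => Sym2.mk p) := by
      constructor
      · intro q hq
        simp only [Finset.mem_image, Finset.mem_filter, Finset.mem_univ, true_and] at hq ⊢
        obtain ⟨p, hp, rfl⟩ := hq
        exact ⟨p, hbridgeD p.1 p.2 hp, rfl⟩
      · intro hsub
        have h1 : Sym2.mk (u, v) ∈ (((Finset.univ : Finset (V × V)).filter
            fun p => IsBridge H p.1 p.2).image fun p => Sym2.mk p) := by
          refine Finset.mem_image.mpr ⟨(u, v), ?_, rfl⟩
          exact Finset.mem_filter.mpr ⟨Finset.mem_univ _, hedge, hnotr⟩
        have h2' := hsub h1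
        simp only [Finset.mem_image, Finset.mem_filter, Finset.mem_univ, true_and] at h2'
        obtain ⟨⟨p1, p2⟩, hp, hpe⟩ := h2'
        rcases Sym2.eq_iff.mp (congrFun hpe (p1, p2)) with ⟨hx, hy⟩ | ⟨hx, hy⟩
        · obtain ⟨rfl, rfl⟩ := Prod.mk.inj hx
          exact hnotBruv hp
        · obtain ⟨rfl, rfl⟩ := Prod.mk.inj hy
          exact hnotBruv hp
    exact Finset.card_lt_card hss
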